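/- Let p : (α, β) → ℝ be continuous and strictly increasing with p(x) → ∞ as x → β⁻, and let ψ : (α, β) → (0, ∞) satisfy: the right derivative d⁺ψ/dp exists on (α, β) and lim_{x→β⁻} (d⁺ψ/dp)(x) = L ∈ (0, ∞]. Then lim_{x→β⁻} ψ(x)/p(x) = L. -/

import Mathlib

open Filter Set Topology MeasureTheory
open scoped ENNReal

/-- The filter of real numbers tending to the (possibly infinite) extended-real
endpoint `b` from the left. -/
noncomputable def leftLimFilter (b : EReal) : Filter ℝ :=
  Filter.comap (fun x : ℝ => (x : EReal)) (nhdsWithin b (Set.Iio b))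

lemma slope_core (α β : EReal) (p ψ D : ℝ → ℝ)
    (hp_mono : StrictMonoOn p {x : ℝ | α < (x : EReal) ∧ (x : EReal) < β})
    (hp_cont : ContinuousOn p {x : ℝ | α < (x : EReal) ∧ (x : EReal) < β})
    (hψ_cont : ContinuousOn ψ {x : ℝ | α < (x : EReal) ∧ (x : EReal) < β})
    (hD : ∀ x : ℝ, α < (x : EReal) → (x : EReal) < β →
      Tendsto (fun ε => (ψ (x + ε) - ψ x) / (p (x + ε) - p x))
        (nhdsWithin 0 (Set.Ioi 0)) (nhds (D x)))
    (a b m : ℝ) (hab : a ≤ b) (ha : α < (a : EReal)) (hb : (b : EReal) < β)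
    (hm : ∀ x : ℝ, a ≤ x → x ≤ b → m < D x) :
    m * (p b - p a) ≤ ψ b - ψ a := by
  have hsub : Icc a b ⊆ {x : ℝ | α < (x : EReal) ∧ (x : EReal) < β} := fun x hx =>
    ⟨lt_of_lt_of_le ha (EReal.coe_le_coe_iff.2 hx.1),
     lt_of_le_of_lt (EReal.coe_le_coe_iff.2 hx.2) hb⟩
  set f : ℝ → ℝ := fun z => m * p z - ψ z with hf_def
  have hf : ContinuousOn f (Icc a b) :=
    (continuousOn_const.mul (hp_cont.mono hsub)).sub (hψ_cont.mono hsub)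
  have key : f b ≤ f a := by
    have := image_le_of_liminf_slope_right_le_deriv_boundary (f := f) (a := a) (b := b)
      (B := fun _ => f a) (B' := fun _ => 0) hf le_rfl continuousOn_const
      (fun x _ => hasDerivWithinAt_const x _ (f a)) ?_ (right_mem_Icc.2 hab)
    · exact this
    · intro x hx r hr
      have hx1 : α < (x : EReal) := (hsub ⟨hx.1, hx.2.le⟩).1
      have hx2 : (x : EReal) < β := (hsub ⟨hx.1, hx.2.le⟩).2
      have h1 : Tendsto (fun z : ℝ => z - x) (𝓝[>] x) (𝓝[>] (0:ℝ)) := by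
        apply tendsto_nhdsWithin_of_tendsto_nhds_of_eventually_within
        · have : Tendsto (fun z : ℝ => z - x) (𝓝 x) (𝓝 (x - x)) :=
            (continuous_id.sub continuous_const).tendsto x
          simpa using this.mono_left nhdsWithin_le_nhds
        · filter_upwards [self_mem_nhdsWithin] with z hz
          exact sub_pos.2 (show x < z from hz)
      have h2 : ∀ᶠ z in 𝓝[>] x, m < (ψ z - ψ x) / (p z - p x) := by
        have := ((hD x hx1 hx2).comp h1).eventually (eventually_gt_nhds (hm x hx.1 hx.2.le))
        filter_upwards [this] with z hz
        simpa using hz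
      have h3 : ∀ᶠ z in 𝓝[>] x, z < b :=
        eventually_nhdsWithin_of_eventually_nhds (eventually_lt_nhds hx.2)
      have h4 : ∀ᶠ z in 𝓝[>] x, f z < f x := by
        filter_upwards [h2, h3, self_mem_nhdsWithin] with z hz hzb hzx
        have hzS : z ∈ {x : ℝ | α < (x : EReal) ∧ (x : EReal) < β} :=
          hsub ⟨le_of_lt (lt_of_le_of_lt hx.1 hzx), hzb.le⟩
        have hpd : 0 < p z - p x := sub_pos.2 (hp_mono (hsub ⟨hx.1, hx.2.le⟩) hzS hzx)
        have : m * (p z - p x) < ψ z - ψ x := (lt_div_iff₀ hpd).1 hz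
        simp only [hf_def]; nlinarith
      have h5 : ∀ᶠ z in 𝓝[>] x, slope f x z < r := by
        filter_upwards [h4, self_mem_nhdsWithin] with z hz hzx
        have : slope f x z < 0 := by
          rw [slope_def_field]
          exact div_neg_of_neg_of_pos (by linarith) (sub_pos.2 hzx)
        have hr' : (0:ℝ) < r := hr
        linarith
      exact h5.frequently
  simp only [hf_def] at key; linarith

lemma llf_mem (β : EReal) (a : ℝ) (hab : (a : EReal) < β) :
    {x : ℝ | a < x ∧ (x : EReal) < β} ∈ leftLimFilter β := by
  have h : Ioo (a : EReal) β ∈ 𝓝[<] β := Ioo_mem_nhdsLT hab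
  refine mem_comap.2 ⟨Ioo (a : EReal) β, h, ?_⟩
  intro x hx
  exact ⟨EReal.coe_lt_coe_iff.1 hx.1, hx.2⟩

lemma llf_exists (α β : EReal) (hαβ : α < β) {s : Set ℝ} (hs : s ∈ leftLimFilter β) :
    ∃ a : ℝ, α < (a : EReal) ∧ (a : EReal) < β ∧
      ∀ x : ℝ, a < x → (x : EReal) < β → x ∈ s := by
  rcases mem_comap.1 hs with ⟨t, ht, hts⟩
  rcases (mem_nhdsLT_iff_exists_Ioo_subset' hαβ).1 ht with ⟨c, hc, hsub⟩
  rcases EReal.lt_iff_exists_real_btwn.1 (max_lt hc hαβ : max c α < β) with ⟨a, ha1, ha2⟩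
  exact ⟨a, (le_max_right _ _).trans_lt ha1, ha2, fun x hx hxβ =>
    hts (hsub ⟨((le_max_left _ _).trans_lt ha1).trans (EReal.coe_lt_coe_iff.2 hx), hxβ⟩)⟩

/-- If `p : (α, β) → ℝ` is continuous strictly increasing with `p(x) → ∞` as `x → β⁻`, and
`ψ : (α, β) → (0, ∞)` is continuous with right derivative `d⁺ψ/dp → L ∈ (0, ∞]` at `β⁻`,
then `ψ(x)/p(x) → L` as `x → β⁻`. -/
theorem ratio_to_scale_tendsto_of_right_derivative
    (α β : EReal) (hαβ : α < β)
    (p ψ D : ℝ → ℝ)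
    (hp_mono : StrictMonoOn p {x : ℝ | α < (x : EReal) ∧ (x : EReal) < β})
    (hp_cont : ContinuousOn p {x : ℝ | α < (x : EReal) ∧ (x : EReal) < β})
    (hp_top : Tendsto p (leftLimFilter β) atTop)
    (hψ_pos : ∀ x : ℝ, α < (x : EReal) → (x : EReal) < β → 0 < ψ x)
    (hψ_cont : ContinuousOn ψ {x : ℝ | α < (x : EReal) ∧ (x : EReal) < β})
    (hD : ∀ x : ℝ, α < (x : EReal) → (x : EReal) < β →
      Tendsto (fun ε => (ψ (x + ε) - ψ x) / (p (x + ε) - p x))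
        (nhdsWithin 0 (Set.Ioi 0)) (nhds (D x)))
    (L : EReal) (hL0 : 0 < L)
    (hL : Tendsto (fun x => (D x : EReal)) (leftLimFilter β) (nhds L)) :
    Tendsto (fun x => ((ψ x / p x : ℝ) : EReal)) (leftLimFilter β) (nhds L) := by
  have lower : ∀ m : ℝ, (∀ᶠ x in leftLimFilter β, m < D x) →
      ∃ C : ℝ, ∀ᶠ x in leftLimFilter β, m + C / p x ≤ ψ x / p x := by
    intro m hm
    obtain ⟨a, ha1, ha2, ha3⟩ := llf_exists α β hαβ hm
    obtain ⟨a₀, h01, h02⟩ := EReal.lt_iff_exists_real_btwn.1 ha2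
    refine ⟨ψ a₀ - m * p a₀, ?_⟩
    filter_upwards [llf_mem β a₀ h02, hp_top.eventually (eventually_gt_atTop 0)] with x hx hpx
    have hcore := slope_core α β p ψ D hp_mono hp_cont hψ_cont hD a₀ x m hx.1.le
      (ha1.trans h01) hx.2
      (fun y hy1 hy2 => ha3 y (lt_of_lt_of_le (EReal.coe_lt_coe_iff.1 h01) hy1)
        ((EReal.coe_le_coe_iff.2 hy2).trans_lt hx.2))
    have h : m * p x + (ψ a₀ - m * p a₀) ≤ ψ x := by linarith
    calc m + (ψ a₀ - m * p a₀) / p x = (m * p x + (ψ a₀ - m * p a₀)) / p x := by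
          field_simp
      _ ≤ ψ x / p x := by gcongr
  have upper : ∀ M : ℝ, (∀ᶠ x in leftLimFilter β, D x < M) →
      ∃ C : ℝ, ∀ᶠ x in leftLimFilter β, ψ x / p x ≤ M + C / p x := by
    intro M hM
    obtain ⟨a, ha1, ha2, ha3⟩ := llf_exists α β hαβ hM
    obtain ⟨a₀, h01, h02⟩ := EReal.lt_iff_exists_real_btwn.1 ha2
    refine ⟨ψ a₀ - M * p a₀, ?_⟩
    filter_upwards [llf_mem β a₀ h02, hp_top.eventually (eventually_gt_atTop 0)] with x hx hpx
    have hcore := slope_core α β p (fun z => -ψ z) (fun z => -D z) hp_mono hp_cont hψ_cont.neg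
      (fun y hy1 hy2 => ((hD y hy1 hy2).neg).congr (fun ε => by ring)) a₀ x (-M) hx.1.le
      (ha1.trans h01) hx.2
      (fun y hy1 hy2 => neg_lt_neg (ha3 y (lt_of_lt_of_le (EReal.coe_lt_coe_iff.1 h01) hy1)
        ((EReal.coe_le_coe_iff.2 hy2).trans_lt hx.2)))
    have h : ψ x ≤ M * p x + (ψ a₀ - M * p a₀) := by linarith
    calc ψ x / p x ≤ (M * p x + (ψ a₀ - M * p a₀)) / p x := by gcongr
      _ = M + (ψ a₀ - M * p a₀) / p x := by field_simp
  by_cases hLtop : L = ⊤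
  · subst hLtop
    rw [EReal.tendsto_nhds_top_iff_real] at hL ⊢
    intro r
    have hD' : ∀ᶠ x in leftLimFilter β, (r + 1) < D x := by
      filter_upwards [hL (r + 1)] with x hx
      exact_mod_cast hx
    obtain ⟨C, hC⟩ := lower (r + 1) hD'
    have hC0 : Tendsto (fun x => C / p x) (leftLimFilter β) (𝓝 0) :=
      tendsto_const_nhds.div_atTop hp_top
    filter_upwards [hC, hC0.eventually (eventually_gt_nhds (show (-1:ℝ) < 0 by norm_num))]
      with x h1 h2
    exact_mod_cast (show r < ψ x / p x by linarith)
  · have hbot : L ≠ ⊥ := ne_bot_of_gt hL0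
    lift L to ℝ using ⟨hLtop, hbot⟩
    rw [EReal.tendsto_coe] at hL ⊢
    rw [tendsto_order]
    constructor
    · intro r hr
      have hm2 : (r + L) / 2 < L := by linarith
      obtain ⟨C, hC⟩ := lower ((r + L) / 2) (hL.eventually (eventually_gt_nhds hm2))
      have hC0 : Tendsto (fun x => C / p x) (leftLimFilter β) (𝓝 0) :=
        tendsto_const_nhds.div_atTop hp_top
      filter_upwards [hC,
        hC0.eventually (eventually_gt_nhds (show r - (r + L) / 2 < 0 by linarith))] with x h1 h2
      linarith
    · intro r hr
      have hm2 : L < (r + L) / 2 := by linarith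
      obtain ⟨C, hC⟩ := upper ((r + L) / 2) (hL.eventually (eventually_lt_nhds hm2))
      have hC0 : Tendsto (fun x => C / p x) (leftLimFilter β) (𝓝 0) :=
        tendsto_const_nhds.div_atTop hp_top
      filter_upwards [hC,
        hC0.eventually (eventually_lt_nhds (show (0:ℝ) < r - (r + L) / 2 by linarith))] with x h1 h2
      linarith
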